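/- Let A be a C*-algebra and φ a compactly supported state on A, i.e. there exists a nonzero a ∈ A with φ(a) = ‖a‖. Then there exists a compactly supported bump a' ∈ cA with φ(a') = 1. -/

import Mathlib

open Filter Topology
open scoped ComplexOrder ENNReal NNReal MultiplierAlgebra

noncomputable section

/-- A *state* on a C⋆-algebra: a continuous linear functional into `ℂ` that is nonnegative
on nonnegative elements and has norm `1`. -/
def IsState {E : Type*} [NormedAddCommGroup E] [NormedSpace ℂ E] [PartialOrder E]
    (φ : E →L[ℂ] ℂ) : Prop :=
  (∀ a : E, 0 ≤ a → 0 ≤ φ a) ∧ ‖φ‖ = 1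

variable {A : Type*} [NonUnitalCStarAlgebra A] [PartialOrder A] [StarOrderedRing A]

/-- `L` is an extended seminorm on the self-adjoint part `A_sa` of `A`:
`L (t • b) = |t| * L b` for real `t`, and `L (b + b') ≤ L b + L b'`. -/
def IsESeminorm (L : selfAdjoint A → ℝ≥0∞) : Prop :=
  (∀ (t : ℝ) (b : selfAdjoint A), L (t • b) = (‖t‖₊ : ℝ≥0∞) * L b) ∧
    ∀ b b' : selfAdjoint A, L (b + b') ≤ L b + L b'

/-- The spectral distance `d_L(φ, ψ) = sup { |φ b - ψ b| : b ∈ A_sa, L b ≤ 1 }`,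
valued in `[0, ∞]`. -/
def dL (L : selfAdjoint A → ℝ≥0∞) (φ ψ : A → ℂ) : ℝ≥0∞ :=
  ⨆ b : {b : selfAdjoint A // L b ≤ 1}, (‖φ (b.1 : A) - ψ (b.1 : A)‖₊ : ℝ≥0∞)

/-- An approximate identity for `A`: a net `(I n)` with `0 ≤ I n`, `‖I n‖ ≤ 1`, and
`‖I n * a - a‖ → 0`, `‖a * I n - a‖ → 0` for every `a : A`. -/
def IsApproxUnit {ι : Type*} [Preorder ι] (I : ι → A) : Prop :=
  (∀ n, 0 ≤ I n) ∧ (∀ n, ‖I n‖ ≤ 1) ∧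
    ∀ a : A, Tendsto (fun n => ‖I n * a - a‖) atTop (𝓝 0) ∧
      Tendsto (fun n => ‖a * I n - a‖) atTop (𝓝 0)

/-- A compactly supported bump: `0 ≤ a`, `‖a‖ = 1`, and there is `I_a` with `0 ≤ I_a`,
`‖I_a‖ ≤ 1` and `I_a * a = a`. -/
def IsBump (a : A) : Prop :=
  0 ≤ a ∧ ‖a‖ = 1 ∧ ∃ Ia : A, 0 ≤ Ia ∧ ‖Ia‖ ≤ 1 ∧ Ia * a = a

open ComplexStarModule in
private lemma state_im_eq_zero (φ : A →L[ℂ] ℂ) (hpos : ∀ a : A, 0 ≤ a → 0 ≤ φ a)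
    {s : A} (hs : IsSelfAdjoint s) : (φ s).im = 0 := by
  have h1 : 0 ≤ φ (s⁺) := hpos _ (CFC.posPart_nonneg s)
  have h2 : 0 ≤ φ (s⁻) := hpos _ (CFC.negPart_nonneg s)
  have h3 : φ s = φ (s⁺) - φ (s⁻) := by rw [← map_sub, CFC.posPart_sub_negPart s hs]
  rw [h3, Complex.sub_im, ← (Complex.nonneg_iff.mp h1).2, ← (Complex.nonneg_iff.mp h2).2]
  ring

open ComplexStarModule in
private lemma state_map_star (φ : A →L[ℂ] ℂ) (hpos : ∀ a : A, 0 ≤ a → 0 ≤ φ a)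
    (x : A) : φ (star x) = starRingEnd ℂ (φ x) := by
  have hre := state_im_eq_zero φ hpos (ℜ x).2
  have him' := state_im_eq_zero φ hpos (ℑ x).2
  have hx : (ℜ x : A) + Complex.I • (ℑ x : A) = x := realPart_add_I_smul_imaginaryPart x
  have hsx : (ℜ x : A) - Complex.I • (ℑ x : A) = star x := by
    conv_rhs => rw [← hx]
    rw [star_add, star_smul, (ℜ x).2.star_eq, (ℑ x).2.star_eq]
    simp [Complex.star_def, Complex.conj_I, sub_eq_add_neg, neg_smul]
  conv_rhs => rw [← hx]
  rw [← hsx, map_sub, map_add, map_smul]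
  apply Complex.ext <;> simp [hre, him', Complex.ext_iff]

private lemma exists_bump_aux (φ : A →L[ℂ] ℂ) (hpos : ∀ a : A, 0 ≤ a → 0 ≤ φ a)
    (hbound : ∀ x : A, ‖φ x‖ ≤ ‖x‖)
    (R : ℝ) (hR0 : (0:ℝ) < R) (h : A) (hhsa : IsSelfAdjoint h)
    (hspec : ∀ x ∈ quasispectrum ℝ h, |x| ≤ R)
    (hφp : φ (h⁺) = (R : ℂ)) :
    ∃ a' : A, IsBump a' ∧ φ a' = 1 := by
  set q : ℝ → ℝ := fun t => R⁻¹ * max t 0 with hq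
  set f : ℝ → ℝ := fun s => min 1 (max 0 (4*s-3)) with hf
  set g : ℝ → ℝ := fun s => min 1 (max 0 (4*s-2)) with hg
  have hqc : ContinuousOn q (quasispectrum ℝ h) := by fun_prop
  have hfc : Continuous f := by fun_prop
  have hgc : Continuous g := by fun_prop
  have hq0 : q 0 = 0 := by simp [hq]
  have hf0 : f (q 0) = 0 := by norm_num [hq, hf]
  have hg0 : g (q 0) = 0 := by norm_num [hq, hg]
  have hf01 : ∀ s, 0 ≤ f s ∧ f s ≤ 1 := fun s =>
    ⟨le_min (by norm_num) (le_max_left _ _), min_le_left _ _⟩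
  have hg01 : ∀ s, 0 ≤ g s ∧ g s ≤ 1 := fun s =>
    ⟨le_min (by norm_num) (le_max_left _ _), min_le_left _ _⟩
  have hfle4 : ∀ s, 0 ≤ s → f s ≤ 4 * s := fun s hs =>
    (min_le_right _ _).trans (max_le (by linarith) (by linarith))
  have hq01 : ∀ t ∈ quasispectrum ℝ h, 0 ≤ q t ∧ q t ≤ 1 := by
    intro t ht
    constructor
    · exact mul_nonneg (by positivity) (le_max_right _ _)
    · rw [hq]
      have hm : max t 0 ≤ R := max_le ((le_abs_self t).trans (hspec t ht)) hR0.le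
      calc R⁻¹ * max t 0 ≤ R⁻¹ * R := mul_le_mul_of_nonneg_left hm (by positivity)
        _ = 1 := by field_simp
  set b : A := cfcₙ q h with hb
  have hbp : b = R⁻¹ • h⁺ := by
    rw [hb, CFC.posPart_def, ← cfcₙ_const_mul R⁻¹ (·⁺) h (by fun_prop) (by simp)]
    exact cfcₙ_congr fun t _ => by simp [hq, _root_.posPart_def, max_comm]
  have hφb : φ b = 1 := by
    rw [hbp, φ.map_smul_of_tower, hφp, Complex.real_smul]
    rw [← Complex.ofReal_mul, inv_mul_cancel₀ hR0.ne', Complex.ofReal_one]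
  set a' : A := cfcₙ (fun t => f (q t)) h with ha'
  set Ia : A := cfcₙ (fun t => g (q t)) h with hIa
  have ha'0 : 0 ≤ a' := cfcₙ_nonneg fun t _ => (hf01 _).1
  have ha'le : ‖a'‖ ≤ 1 := norm_cfcₙ_le fun t _ => by
    rw [Real.norm_eq_abs, abs_of_nonneg (hf01 _).1]; exact (hf01 _).2
  have hIa0 : 0 ≤ Ia := cfcₙ_nonneg fun t _ => (hg01 _).1
  have hIale : ‖Ia‖ ≤ 1 := norm_cfcₙ_le fun t _ => by
    rw [Real.norm_eq_abs, abs_of_nonneg (hg01 _).1]; exact (hg01 _).2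
  have hmul : Ia * a' = a' := by
    rw [hIa, ha', ← cfcₙ_mul _ _ h (by fun_prop) (by rw [hg0]) (by fun_prop) (by rw [hf0])]
    refine cfcₙ_congr fun t _ => ?_
    rcases le_or_gt (q t) (3/4) with hle | hlt
    · have : f (q t) = 0 := by
        rw [hf]
        simp only
        rw [max_eq_left (by linarith), min_eq_right (by norm_num)]
      simp [this]
    · have : g (q t) = 1 := by
        rw [hg]
        simp only
        rw [max_eq_right (by linarith), min_eq_left (by linarith)]
      simp [this]
  set y : A := cfcₙ (fun t => 4 * q t - f (q t)) h with hy
  have hy0 : 0 ≤ y := cfcₙ_nonneg fun t ht => by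
    have := hfle4 (q t) (hq01 t ht).1
    linarith
  have hynorm : ‖y‖ ≤ 3 := norm_cfcₙ_le fun t ht => by
    obtain ⟨h1, h2⟩ := hq01 t ht
    have hge : 4 * q t - 3 ≤ f (q t) := le_min (by linarith) (le_max_right _ _)
    have hle := hfle4 (q t) h1
    rw [Real.norm_eq_abs, abs_le]
    constructor <;> linarith
  have hyeq : y = (4:ℝ) • b - a' := by
    rw [hy, hb, ha', ← cfcₙ_const_mul (4:ℝ) q h hqc (by rw [hq0])]
    exact cfcₙ_sub _ _ _ (by fun_prop) (by simp [hq0]) (by fun_prop) (by rw [hf0])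
  have hφy : φ y = 4 - φ a' := by
    rw [hyeq, map_sub, φ.map_smul_of_tower, hφb, Complex.real_smul]
    norm_num
  have hφy0 : 0 ≤ φ y := hpos _ hy0
  have hφyre : (φ y).re ≤ 3 := (Complex.re_le_norm _).trans ((hbound y).trans hynorm)
  have hφa'0 : 0 ≤ φ a' := hpos _ ha'0
  rw [Complex.nonneg_iff] at hφa'0
  have hare : 1 ≤ (φ a').re := by
    have := congrArg Complex.re hφy
    simp only [Complex.sub_re] at this
    norm_num at this
    linarith
  have hare' : (φ a').re ≤ 1 := by
    calc (φ a').re ≤ ‖φ a'‖ := Complex.re_le_norm _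
      _ ≤ ‖a'‖ := hbound _
      _ ≤ 1 := ha'le
  have hφa' : φ a' = 1 := by
    apply Complex.ext
    · simp; linarith
    · simpa using hφa'0.2.symm
  refine ⟨a', ⟨ha'0, ?_, Ia, hIa0, hIale, hmul⟩, hφa'⟩
  refine le_antisymm ha'le ?_
  calc (1:ℝ) = ‖φ a'‖ := by rw [hφa']; simp
    _ ≤ ‖a'‖ := hbound _

open ComplexStarModule in
/-- A compactly supported state (one attaining its norm on `A`) attains the value `1`
on some compactly supported bump. -/
theorem exists_bump_of_compactlySupported (φ : A →L[ℂ] ℂ) (hφ : IsState φ)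
    (a : A) (ha : a ≠ 0) (hnorm : φ a = (‖a‖ : ℂ)) :
    ∃ a' : A, IsBump a' ∧ φ a' = 1 := by
  classical
  obtain ⟨hpos, hnφ⟩ := hφ
  have hbound : ∀ x : A, ‖φ x‖ ≤ ‖x‖ := fun x => by simpa [hnφ] using φ.le_opNorm x
  have hstar : ∀ x : A, φ (star x) = starRingEnd ℂ (φ x) := state_map_star φ hpos
  set R : ℝ := ‖a‖ with hR
  have hR0 : (0:ℝ) < R := norm_pos_iff.mpr ha
  set h : A := (ℜ a : A) with hh
  have hhsa : IsSelfAdjoint h := (ℜ a).2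
  have hφh : φ h = (R : ℂ) := by
    rw [hh, realPart_apply_coe, φ.map_smul_of_tower, map_add, hstar, hnorm]
    simp only [Complex.real_smul, Complex.conj_ofReal]
    push_cast
    ring
  have hhle : ‖h‖ ≤ R := by
    rw [hh, realPart_apply_coe]
    calc ‖(2:ℝ)⁻¹ • (a + star a)‖ ≤ (2:ℝ)⁻¹ * (‖a‖ + ‖star a‖) := by
          rw [norm_smul]
          gcongr
          · simp
          · exact norm_add_le _ _
      _ = R := by rw [norm_star]; ring
  have hspec : ∀ x ∈ quasispectrum ℝ h, |x| ≤ R := by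
    intro x hx
    have := norm_apply_le_norm_cfcₙ (id : ℝ → ℝ) h hx (by fun_prop) rfl hhsa
    rw [cfcₙ_id ℝ h] at this
    have h' : |x| ≤ ‖h‖ := by simpa using this
    exact h'.trans hhle
  have hpnorm : ‖h⁺‖ ≤ R := by
    rw [CFC.posPart_def]
    refine norm_cfcₙ_le fun x hx => ?_
    have : |x⁺| ≤ |x| := by
      rw [_root_.posPart_def, abs_of_nonneg (le_max_right x 0)]
      exact max_le (le_abs_self x) (abs_nonneg x)
    simpa using this.trans (hspec x hx)
  have hφp : φ (h⁺) = (R : ℂ) := by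
    have h1 : 0 ≤ φ (h⁺) := hpos _ (CFC.posPart_nonneg h)
    have h2 : 0 ≤ φ (h⁻) := hpos _ (CFC.negPart_nonneg h)
    have h3 : φ h = φ (h⁺) - φ (h⁻) := by rw [← map_sub, CFC.posPart_sub_negPart h hhsa]
    rw [Complex.nonneg_iff] at h1 h2
    have hre : (φ (h⁺)).re - (φ (h⁻)).re = R := by
      have := congrArg Complex.re h3
      rw [hφh] at this
      simpa using this.symm
    have hle : (φ (h⁺)).re ≤ R :=
      ((Complex.re_le_norm _).trans ((hbound _).trans hpnorm))
    have h2' : (φ (h⁻)).re = 0 := le_antisymm (by linarith) h2.1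
    apply Complex.ext
    · simp only [Complex.ofReal_re]; linarith
    · simpa using h1.2.symm
  exact exists_bump_aux φ hpos hbound R hR0 h hhsa hspec hφp
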